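/- Let (X1,Y1),...,(X4,Y4) be i.i.d. copies of (X,Y) with X independent of Y, and let h be the symmetrized kernel h((x1,y1),...,(x4,y4)) = (1/4!) Σ_{π ∈ S4} a(x_{π(1)},...,x_{π(4)}) a(y_{π(1)},...,y_{π(4)}). Then h1(x1,y1) := E[h((x1,y1),(X2,Y2),(X3,Y3),(X4,Y4))] = 0 for all (x1,y1). Consequently σ1² = Var[h1(X1,Y1)] = 0; i.e., the U-statistic t* is degenerate under independence. -/

import Mathlib

open Classical MeasureTheory

/-- The Bergsma–Dassios sign function `a`. -/
noncomputable def signA (z1 z2 z3 z4 : ℝ) : ℝ :=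
  (if max z1 z3 < min z2 z4 then (1:ℝ) else 0)
    + (if max z2 z4 < min z1 z3 then (1:ℝ) else 0)
    - (if max z1 z2 < min z3 z4 then (1:ℝ) else 0)
    - (if max z3 z4 < min z1 z2 then (1:ℝ) else 0)

/-- The symmetrized Bergsma–Dassios kernel `h`. -/
noncomputable def hKer (p : Fin 4 → ℝ × ℝ) : ℝ :=
  (1 / 24) * ∑ π : Equiv.Perm (Fin 4),
    signA (p (π 0)).1 (p (π 1)).1 (p (π 2)).1 (p (π 3)).1 *
      signA (p (π 0)).2 (p (π 1)).2 (p (π 2)).2 (p (π 3)).2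

section Helpers

lemma abs_signA_le (a b c d : ℝ) : |signA a b c d| ≤ 2 := by
  unfold signA; split_ifs <;> norm_num

lemma signA_antisymm12 (a b c d : ℝ) : signA a b c d = - signA a c b d := by
  unfold signA; ring

lemma signA_antisymm03 (a b c d : ℝ) : signA a b c d = - signA d b c a := by
  unfold signA
  simp only [max_comm, min_comm]
  ring

@[fun_prop] lemma signA_measurable {α : Type*} [MeasurableSpace α] {g1 g2 g3 g4 : α → ℝ}
    (h1 : Measurable g1) (h2 : Measurable g2) (h3 : Measurable g3) (h4 : Measurable g4) :
    Measurable fun a => signA (g1 a) (g2 a) (g3 a) (g4 a) := by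
  unfold signA
  refine Measurable.sub (Measurable.sub (Measurable.add ?_ ?_) ?_) ?_ <;>
    exact Measurable.ite (measurableSet_lt (by fun_prop) (by fun_prop))
      measurable_const measurable_const

lemma integrable_bdd {α : Type*} [MeasurableSpace α] {m : Measure α} [IsFiniteMeasure m]
    {f : α → ℝ} (hm : Measurable f) {C : ℝ} (hb : ∀ x, |f x| ≤ C) : Integrable f m :=
  (integrable_const C).mono' hm.aestronglyMeasurable
    (Filter.Eventually.of_forall fun x => by simpa [Real.norm_eq_abs] using hb x)

lemma norm_integral_bdd {α : Type*} [MeasurableSpace α] {m : Measure α} [IsProbabilityMeasure m]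
    {f : α → ℝ} {C : ℝ} (hb : ∀ x, |f x| ≤ C) : |∫ x, f x ∂m| ≤ C := by
  have := norm_integral_le_of_norm_le_const (μ := m) (f := f) (C := C)
    (Filter.Eventually.of_forall fun x => by simpa [Real.norm_eq_abs] using hb x)
  simpa [Real.norm_eq_abs, measure_univ] using this

lemma abs_mul_le4 {u v : ℝ} (hu : |u| ≤ 2) (hv : |v| ≤ 2) : |u * v| ≤ 4 := by
  rw [abs_mul]
  nlinarith [abs_nonneg u, abs_nonneg v]

end Helpers

section T3

variable (m' : Measure ℝ) [IsProbabilityMeasure m']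

lemma swap_inner {f : ℝ → ℝ → ℝ} (hm : Measurable fun p : ℝ × ℝ => f p.1 p.2)
    {C : ℝ} (hb : ∀ x y, |f x y| ≤ C) :
    (∫ x, ∫ y, f x y ∂m' ∂m') = ∫ x, ∫ y, f y x ∂m' ∂m' := by
  have hi : Integrable (Function.uncurry f) (m'.prod m') :=
    integrable_bdd hm (fun p => hb p.1 p.2)
  exact integral_integral_swap hi

lemma swap12 {f : ℝ → ℝ → ℝ → ℝ} (hm : Measurable fun p : ℝ × ℝ × ℝ => f p.1 p.2.1 p.2.2)
    {C : ℝ} (hb : ∀ x y z, |f x y z| ≤ C) :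
    (∫ x, ∫ y, ∫ z, f x y z ∂m' ∂m' ∂m') = ∫ x, ∫ y, ∫ z, f y x z ∂m' ∂m' ∂m' := by
  have hmg : Measurable fun p : ℝ × ℝ => ∫ z, f p.1 p.2 z ∂m' := by
    have h0 : Measurable fun q : (ℝ × ℝ) × ℝ => f q.1.1 q.1.2 q.2 :=
      hm.comp (show Measurable fun q : (ℝ × ℝ) × ℝ => (q.1.1, (q.1.2, q.2)) by fun_prop)
    exact h0.stronglyMeasurable.integral_prod_right'.measurable
  exact swap_inner m' hmg (fun x y => norm_integral_bdd (fun z => hb x y z))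

lemma swap23 {f : ℝ → ℝ → ℝ → ℝ} (hm : Measurable fun p : ℝ × ℝ × ℝ => f p.1 p.2.1 p.2.2)
    {C : ℝ} (hb : ∀ x y z, |f x y z| ≤ C) :
    (∫ x, ∫ y, ∫ z, f x y z ∂m' ∂m' ∂m') = ∫ x, ∫ y, ∫ z, f x z y ∂m' ∂m' ∂m' := by
  have key : ∀ x, (∫ y, ∫ z, f x y z ∂m' ∂m') = ∫ y, ∫ z, f x z y ∂m' ∂m' := by
    intro x
    exact swap_inner m' (f := fun y z => f x y z)
      (hm.comp (show Measurable fun p : ℝ × ℝ => ((x : ℝ), (p.1, p.2)) by fun_prop))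
      (fun y z => hb x y z)
  simp only [key]

lemma swap13 {f : ℝ → ℝ → ℝ → ℝ} (hm : Measurable fun p : ℝ × ℝ × ℝ => f p.1 p.2.1 p.2.2)
    {C : ℝ} (hb : ∀ x y z, |f x y z| ≤ C) :
    (∫ x, ∫ y, ∫ z, f x y z ∂m' ∂m' ∂m') = ∫ x, ∫ y, ∫ z, f z y x ∂m' ∂m' ∂m' := by
  rw [swap12 m' hm hb]
  rw [swap23 m' (f := fun x y z => f y x z)
    (hm.comp (show Measurable fun p : ℝ × ℝ × ℝ => (p.2.1, (p.1, p.2.2)) by fun_prop))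
    (fun x y z => hb y x z)]
  exact swap12 m' (f := fun x y z => f z x y)
    (hm.comp (show Measurable fun p : ℝ × ℝ × ℝ => (p.2.2, (p.1, p.2.1)) by fun_prop))
    (fun x y z => hb z x y)

lemma Tzero12 {f : ℝ → ℝ → ℝ → ℝ} (hm : Measurable fun p : ℝ × ℝ × ℝ => f p.1 p.2.1 p.2.2)
    (hb : ∀ x y z, |f x y z| ≤ 2) (hA : ∀ x y z, f x y z = - f y x z) :
    (∫ x, ∫ y, ∫ z, f x y z ∂m' ∂m' ∂m') = 0 := by
  have h1 := swap12 m' hm hb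
  have h2 : (∫ x, ∫ y, ∫ z, f y x z ∂m' ∂m' ∂m')
      = - ∫ x, ∫ y, ∫ z, f x y z ∂m' ∂m' ∂m' := by
    rw [← integral_neg]
    refine integral_congr_ae (Filter.Eventually.of_forall fun x => ?_)
    dsimp only
    rw [← integral_neg]
    refine integral_congr_ae (Filter.Eventually.of_forall fun y => ?_)
    dsimp only
    rw [← integral_neg]
    refine integral_congr_ae (Filter.Eventually.of_forall fun z => ?_)
    dsimp only
    exact hA y x z
  linarith

lemma Tzero23 {f : ℝ → ℝ → ℝ → ℝ} (hm : Measurable fun p : ℝ × ℝ × ℝ => f p.1 p.2.1 p.2.2)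
    (hb : ∀ x y z, |f x y z| ≤ 2) (hA : ∀ x y z, f x y z = - f x z y) :
    (∫ x, ∫ y, ∫ z, f x y z ∂m' ∂m' ∂m') = 0 := by
  have h1 := swap23 m' hm hb
  have h2 : (∫ x, ∫ y, ∫ z, f x z y ∂m' ∂m' ∂m')
      = - ∫ x, ∫ y, ∫ z, f x y z ∂m' ∂m' ∂m' := by
    rw [← integral_neg]
    refine integral_congr_ae (Filter.Eventually.of_forall fun x => ?_)
    dsimp only
    rw [← integral_neg]
    refine integral_congr_ae (Filter.Eventually.of_forall fun y => ?_)
    dsimp only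
    rw [← integral_neg]
    refine integral_congr_ae (Filter.Eventually.of_forall fun z => ?_)
    dsimp only
    have := hA x z y
    linarith
  linarith

lemma Tzero13 {f : ℝ → ℝ → ℝ → ℝ} (hm : Measurable fun p : ℝ × ℝ × ℝ => f p.1 p.2.1 p.2.2)
    (hb : ∀ x y z, |f x y z| ≤ 2) (hA : ∀ x y z, f x y z = - f z y x) :
    (∫ x, ∫ y, ∫ z, f x y z ∂m' ∂m' ∂m') = 0 := by
  have h1 := swap13 m' hm hb
  have h2 : (∫ x, ∫ y, ∫ z, f z y x ∂m' ∂m' ∂m')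
      = - ∫ x, ∫ y, ∫ z, f x y z ∂m' ∂m' ∂m' := by
    rw [← integral_neg]
    refine integral_congr_ae (Filter.Eventually.of_forall fun x => ?_)
    dsimp only
    rw [← integral_neg]
    refine integral_congr_ae (Filter.Eventually.of_forall fun y => ?_)
    dsimp only
    rw [← integral_neg]
    refine integral_congr_ae (Filter.Eventually.of_forall fun z => ?_)
    dsimp only
    have := hA x y z
    linarith
  linarith

lemma K_zero0 (c : ℝ) (p q r s : Fin 4)
    (hpq : p ≠ q) (hpr : p ≠ r) (hps : p ≠ s) (hqr : q ≠ r) (hqs : q ≠ s) (hrs : r ≠ s) :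
    (∫ x, ∫ y, ∫ z, signA (![c,x,y,z] p) (![c,x,y,z] q) (![c,x,y,z] r) (![c,x,y,z] s)
      ∂m' ∂m' ∂m') = 0 := by
  fin_cases p <;> fin_cases q <;> fin_cases r <;> fin_cases s <;>
    simp_all <;>
  first
  | exact Tzero12 m' (by fun_prop) (fun _ _ _ => abs_signA_le _ _ _ _)
      (fun x y z => signA_antisymm12 _ _ _ _)
  | exact Tzero12 m' (by fun_prop) (fun _ _ _ => abs_signA_le _ _ _ _)
      (fun x y z => signA_antisymm03 _ _ _ _)
  | exact Tzero13 m' (by fun_prop) (fun _ _ _ => abs_signA_le _ _ _ _)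
      (fun x y z => signA_antisymm12 _ _ _ _)
  | exact Tzero13 m' (by fun_prop) (fun _ _ _ => abs_signA_le _ _ _ _)
      (fun x y z => signA_antisymm03 _ _ _ _)
  | exact Tzero23 m' (by fun_prop) (fun _ _ _ => abs_signA_le _ _ _ _)
      (fun x y z => signA_antisymm12 _ _ _ _)
  | exact Tzero23 m' (by fun_prop) (fun _ _ _ => abs_signA_le _ _ _ _)
      (fun x y z => signA_antisymm03 _ _ _ _)

end T3

section Main

/-- `signA` applied to a vector of reals permuted by `π`. -/
noncomputable def S4 (π : Equiv.Perm (Fin 4)) (v : Fin 4 → ℝ) : ℝ :=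
  signA (v (π 0)) (v (π 1)) (v (π 2)) (v (π 3))

lemma S4_abs (π : Equiv.Perm (Fin 4)) (v : Fin 4 → ℝ) : |S4 π v| ≤ 2 :=
  abs_signA_le _ _ _ _

lemma S4_meas {α : Type*} [MeasurableSpace α] (π : Equiv.Perm (Fin 4)) {v : α → Fin 4 → ℝ}
    (hv : ∀ j, Measurable fun a => v a j) : Measurable fun a => S4 π (v a) :=
  signA_measurable (hv (π 0)) (hv (π 1)) (hv (π 2)) (hv (π 3))

lemma hKer_eq (p : Fin 4 → ℝ × ℝ) :
    hKer p = (1 / 24) * ∑ π : Equiv.Perm (Fin 4),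
      S4 π (fun i => (p i).1) * S4 π (fun i => (p i).2) := rfl

lemma vec_fst (a b c d : ℝ × ℝ) :
    (fun i : Fin 4 => ((![a,b,c,d] : Fin 4 → ℝ × ℝ) i).1) = ![a.1,b.1,c.1,d.1] := by
  funext i; fin_cases i <;> rfl

lemma vec_snd (a b c d : ℝ × ℝ) :
    (fun i : Fin 4 => ((![a,b,c,d] : Fin 4 → ℝ × ℝ) i).2) = ![a.2,b.2,c.2,d.2] := by
  funext i; fin_cases i <;> rfl

lemma meas_vec_last (a b c : ℝ) (j : Fin 4) : Measurable fun t : ℝ => ![a,b,c,t] j := by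
  fin_cases j
  · simpa using measurable_const
  · simpa using measurable_const
  · simpa using measurable_const
  · simpa using measurable_id'

lemma meas_vec2 (a b : ℝ) (j : Fin 4) : Measurable fun q : ℝ × ℝ => ![a,b,q.1,q.2] j := by
  fin_cases j
  · simpa using measurable_const
  · simpa using measurable_const
  · simpa using measurable_fst
  · simpa using measurable_snd

lemma meas_vec3 (a : ℝ) (j : Fin 4) :
    Measurable fun q : (ℝ × ℝ) × ℝ => ![a, q.1.1, q.1.2, q.2] j := by
  fin_cases j
  · simpa using measurable_const
  · simpa using measurable_fst.fst
  · simpa using measurable_fst.snd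
  · simpa using measurable_snd

variable (μ ν : Measure ℝ) [IsProbabilityMeasure μ] [IsProbabilityMeasure ν]

lemma meas_int1 (m0 : Measure ℝ) [IsProbabilityMeasure m0] (π : Equiv.Perm (Fin 4)) (a b : ℝ) :
    Measurable fun t : ℝ => ∫ d, S4 π ![a,b,t,d] ∂m0 := by
  have h0 : Measurable fun q : ℝ × ℝ => S4 π ![a,b,q.1,q.2] :=
    S4_meas π (fun j => meas_vec2 a b j)
  exact h0.stronglyMeasurable.integral_prod_right'.measurable

lemma meas_int2 (m0 : Measure ℝ) [IsProbabilityMeasure m0] (π : Equiv.Perm (Fin 4)) (a : ℝ) :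
    Measurable fun t : ℝ => ∫ c, ∫ d, S4 π ![a,t,c,d] ∂m0 ∂m0 := by
  have h0 : Measurable fun q : (ℝ × ℝ) × ℝ => S4 π ![a,q.1.1,q.1.2,q.2] :=
    S4_meas π (fun j => meas_vec3 a j)
  have h1 : Measurable fun q : ℝ × ℝ => ∫ d, S4 π ![a,q.1,q.2,d] ∂m0 :=
    h0.stronglyMeasurable.integral_prod_right'.measurable
  exact h1.stronglyMeasurable.integral_prod_right'.measurable

lemma K_zero' (m0 : Measure ℝ) [IsProbabilityMeasure m0] (c : ℝ) (π : Equiv.Perm (Fin 4)) :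
    (∫ b, ∫ cc, ∫ d, S4 π ![c,b,cc,d] ∂m0 ∂m0 ∂m0) = 0 := by
  have h01 : π 0 ≠ π 1 := π.injective.ne (by decide)
  have h02 : π 0 ≠ π 2 := π.injective.ne (by decide)
  have h03 : π 0 ≠ π 3 := π.injective.ne (by decide)
  have h12 : π 1 ≠ π 2 := π.injective.ne (by decide)
  have h13 : π 1 ≠ π 3 := π.injective.ne (by decide)
  have h23 : π 2 ≠ π 3 := π.injective.ne (by decide)
  exact K_zero0 m0 c (π 0) (π 1) (π 2) (π 3) h01 h02 h03 h12 h13 h23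

lemma part1 (w : ℝ × ℝ) :
    (∫ z2, ∫ z3, ∫ z4, hKer ![w, z2, z3, z4] ∂(μ.prod ν) ∂(μ.prod ν) ∂(μ.prod ν)) = 0 := by
  have h4 : ∀ z2 z3 : ℝ × ℝ, (∫ z4, hKer ![w, z2, z3, z4] ∂(μ.prod ν))
      = (1 / 24 : ℝ) * ∑ π : Equiv.Perm (Fin 4),
          (∫ d, S4 π ![w.1, z2.1, z3.1, d] ∂μ) * (∫ d, S4 π ![w.2, z2.2, z3.2, d] ∂ν) := by
    intro z2 z3
    have e1 : ∀ z4 : ℝ × ℝ, hKer ![w, z2, z3, z4]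
        = (1 / 24 : ℝ) * ∑ π : Equiv.Perm (Fin 4),
            S4 π ![w.1, z2.1, z3.1, z4.1] * S4 π ![w.2, z2.2, z3.2, z4.2] := by
      intro z4
      rw [hKer_eq, vec_fst, vec_snd]
    have hint : ∀ π ∈ (Finset.univ : Finset (Equiv.Perm (Fin 4))),
        Integrable (fun z4 : ℝ × ℝ =>
          S4 π ![w.1, z2.1, z3.1, z4.1] * S4 π ![w.2, z2.2, z3.2, z4.2]) (μ.prod ν) := by
      intro π _
      refine integrable_bdd ?_ (C := 4) (fun z4 => abs_mul_le4 (S4_abs _ _) (S4_abs _ _))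
      exact (S4_meas π (fun j => (meas_vec_last w.1 z2.1 z3.1 j).comp measurable_fst)).mul
        (S4_meas π (fun j => (meas_vec_last w.2 z2.2 z3.2 j).comp measurable_snd))
    simp only [e1]
    rw [integral_const_mul, integral_finset_sum _ hint]
    refine congrArg _ (Finset.sum_congr rfl fun π _ => ?_)
    exact integral_prod_mul (f := fun d => S4 π ![w.1, z2.1, z3.1, d])
      (g := fun d => S4 π ![w.2, z2.2, z3.2, d])
  have h3 : ∀ z2 : ℝ × ℝ, (∫ z3, (1 / 24 : ℝ) * ∑ π : Equiv.Perm (Fin 4),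
        (∫ d, S4 π ![w.1, z2.1, z3.1, d] ∂μ) * (∫ d, S4 π ![w.2, z2.2, z3.2, d] ∂ν)
        ∂(μ.prod ν))
      = (1 / 24 : ℝ) * ∑ π : Equiv.Perm (Fin 4),
          (∫ c, ∫ d, S4 π ![w.1, z2.1, c, d] ∂μ ∂μ) * (∫ c, ∫ d, S4 π ![w.2, z2.2, c, d] ∂ν ∂ν) := by
    intro z2
    have hint : ∀ π ∈ (Finset.univ : Finset (Equiv.Perm (Fin 4))),
        Integrable (fun z3 : ℝ × ℝ =>
          (∫ d, S4 π ![w.1, z2.1, z3.1, d] ∂μ) * (∫ d, S4 π ![w.2, z2.2, z3.2, d] ∂ν))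
          (μ.prod ν) := by
      intro π _
      refine integrable_bdd ?_ (C := 4) (fun z3 => abs_mul_le4
        (norm_integral_bdd fun d => S4_abs _ _) (norm_integral_bdd fun d => S4_abs _ _))
      exact ((meas_int1 μ π w.1 z2.1).comp measurable_fst).mul
        ((meas_int1 ν π w.2 z2.2).comp measurable_snd)
    rw [integral_const_mul, integral_finset_sum _ hint]
    refine congrArg _ (Finset.sum_congr rfl fun π _ => ?_)
    exact integral_prod_mul (f := fun c => ∫ d, S4 π ![w.1, z2.1, c, d] ∂μ)
      (g := fun c => ∫ d, S4 π ![w.2, z2.2, c, d] ∂ν)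
  have h2 : (∫ z2, (1 / 24 : ℝ) * ∑ π : Equiv.Perm (Fin 4),
        (∫ c, ∫ d, S4 π ![w.1, z2.1, c, d] ∂μ ∂μ) * (∫ c, ∫ d, S4 π ![w.2, z2.2, c, d] ∂ν ∂ν)
        ∂(μ.prod ν))
      = (1 / 24 : ℝ) * ∑ π : Equiv.Perm (Fin 4),
          (∫ b, ∫ c, ∫ d, S4 π ![w.1, b, c, d] ∂μ ∂μ ∂μ) *
          (∫ b, ∫ c, ∫ d, S4 π ![w.2, b, c, d] ∂ν ∂ν ∂ν) := by
    have hint : ∀ π ∈ (Finset.univ : Finset (Equiv.Perm (Fin 4))),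
        Integrable (fun z2 : ℝ × ℝ =>
          (∫ c, ∫ d, S4 π ![w.1, z2.1, c, d] ∂μ ∂μ) * (∫ c, ∫ d, S4 π ![w.2, z2.2, c, d] ∂ν ∂ν))
          (μ.prod ν) := by
      intro π _
      refine integrable_bdd ?_ (C := 4) (fun z2 => abs_mul_le4
        (norm_integral_bdd fun c => norm_integral_bdd fun d => S4_abs _ _)
        (norm_integral_bdd fun c => norm_integral_bdd fun d => S4_abs _ _))
      exact ((meas_int2 μ π w.1).comp measurable_fst).mul
        ((meas_int2 ν π w.2).comp measurable_snd)
    rw [integral_const_mul, integral_finset_sum _ hint]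
    refine congrArg _ (Finset.sum_congr rfl fun π _ => ?_)
    exact integral_prod_mul (f := fun b => ∫ c, ∫ d, S4 π ![w.1, b, c, d] ∂μ ∂μ)
      (g := fun b => ∫ c, ∫ d, S4 π ![w.2, b, c, d] ∂ν ∂ν)
  simp only [h4]
  simp only [h3]
  rw [h2]
  rw [Finset.sum_eq_zero, mul_zero]
  intro π _
  rw [K_zero' μ w.1 π, zero_mul]

end Main

/-- Under independence (joint law `μ.prod ν`), the first projection `h₁` of the
Bergsma–Dassios kernel vanishes identically; hence `σ₁² = Var[h₁(X₁,Y₁)] = 0`. -/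
theorem h1_eq_zero_of_indep
    (μ ν : Measure ℝ) [IsProbabilityMeasure μ] [IsProbabilityMeasure ν] :
    (∀ x1 y1 : ℝ,
      (∫ z2, ∫ z3, ∫ z4, hKer ![(x1, y1), z2, z3, z4]
          ∂(μ.prod ν) ∂(μ.prod ν) ∂(μ.prod ν)) = 0) ∧
    ProbabilityTheory.variance
      (fun z : ℝ × ℝ =>
        ∫ z2, ∫ z3, ∫ z4, hKer ![z, z2, z3, z4]
          ∂(μ.prod ν) ∂(μ.prod ν) ∂(μ.prod ν)) (μ.prod ν) = 0 := by
  constructor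
  · intro x1 y1
    exact part1 μ ν (x1, y1)
  · have hfun : (fun z : ℝ × ℝ =>
        ∫ z2, ∫ z3, ∫ z4, hKer ![z, z2, z3, z4]
          ∂(μ.prod ν) ∂(μ.prod ν) ∂(μ.prod ν)) = fun _ => (0 : ℝ) :=
      funext fun z => part1 μ ν z
    rw [hfun]
    exact ProbabilityTheory.variance_zero _
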